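/- Let 1 < p < ∞ and r ∈ (−1, p−1). Then the integral operator T defined by (Tf)(x) = ∫₀^∞ f(y)/(x+y) dy is a bounded linear operator on the weighted Lebesgue space L_p((0,∞), x^r dx); i.e., there is a constant C > 0 such that ∫₀^∞ |(Tf)(x)|^p x^r dx ≤ C^p ∫₀^∞ |f(x)|^p x^r dx for all f ∈ L_p((0,∞), x^r dx). -/

import Mathlib

open MeasureTheory Set
open scoped ENNReal

noncomputable def Jker (c : ℝ) : ℝ≥0∞ := ∫⁻ t in Ioi (0:ℝ), ENNReal.ofReal (t ^ c / (1 + t))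

lemma Jker_lt_top {c : ℝ} (h1 : -1 < c) (h2 : c < 0) : Jker c < ⊤ := by
  have hmeas : Measurable fun t : ℝ => t ^ c / (1 + t) :=
    (measurable_id.pow_const c).div (measurable_const.add measurable_id)
  have hint : IntegrableOn (fun t : ℝ => t ^ c / (1 + t)) (Ioi 0) := by
    have h01 : IntegrableOn (fun t : ℝ => t ^ c / (1 + t)) (Ioc 0 1) := by
      have hb : IntegrableOn (fun t : ℝ => t ^ c) (Ioc 0 1) := by
        have := intervalIntegral.intervalIntegrable_rpow' (a := 0) (b := 1) h1
        rwa [intervalIntegrable_iff_integrableOn_Ioc_of_le zero_le_one] at this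
      refine hb.mono' (hmeas.aestronglyMeasurable) ?_
      filter_upwards [ae_restrict_mem measurableSet_Ioc] with t ht
      have ht0 : 0 < t := ht.1
      rw [Real.norm_eq_abs, abs_div, abs_of_nonneg (Real.rpow_nonneg ht0.le _),
        abs_of_pos (by linarith : (0:ℝ) < 1 + t)]
      exact div_le_self (Real.rpow_nonneg ht0.le _) (by linarith)
    have h1i : IntegrableOn (fun t : ℝ => t ^ c / (1 + t)) (Ioi 1) := by
      have hb : IntegrableOn (fun t : ℝ => t ^ (c - 1)) (Ioi 1) :=
        integrableOn_Ioi_rpow_of_lt (by linarith) one_pos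
      refine hb.mono' (hmeas.aestronglyMeasurable) ?_
      filter_upwards [ae_restrict_mem measurableSet_Ioi] with t ht
      have ht0 : (0:ℝ) < t := lt_trans one_pos ht
      rw [Real.norm_eq_abs, abs_div, abs_of_nonneg (Real.rpow_nonneg ht0.le _),
        abs_of_pos (by linarith : (0:ℝ) < 1 + t)]
      have step : t ^ c / (1 + t) ≤ t ^ c / t :=
        div_le_div_of_nonneg_left (Real.rpow_nonneg ht0.le _) ht0 (by linarith)
      have : t ^ c / t = t ^ (c - 1) := by
        rw [Real.rpow_sub ht0, Real.rpow_one]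
      linarith [step, this.le]
    have hset : Ioi (0:ℝ) = Ioc 0 1 ∪ Ioi 1 := by
      ext t
      simp only [mem_Ioi, mem_union, mem_Ioc]
      constructor
      · intro h; rcases le_or_gt t 1 with h'|h'
        · exact Or.inl ⟨h, h'⟩
        · exact Or.inr h'
      · rintro (⟨h,_⟩|h)
        · exact h
        · linarith
    rw [hset]
    exact h01.union h1i
  have : Jker c ≤ ∫⁻ t in Ioi (0:ℝ), ‖t ^ c / (1 + t)‖ₑ := by
    rw [Jker]
    refine lintegral_mono fun t => ?_
    rw [Real.enorm_eq_ofReal_abs]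
    exact ENNReal.ofReal_le_ofReal (le_abs_self _)
  exact lt_of_le_of_lt this hint.2

lemma lintegral_kernel_scale (c : ℝ) {x : ℝ} (hx : 0 < x) :
    ∫⁻ y in Ioi (0:ℝ), ENNReal.ofReal (y ^ c / (x + y)) =
      ENNReal.ofReal (x ^ c) * Jker c := by
  have hg : Measurable fun t : ℝ => x * t := measurable_const.mul measurable_id
  have hmap : Measure.map (fun t : ℝ => x * t) (volume.restrict (Ioi 0)) =
      ENNReal.ofReal x⁻¹ • volume.restrict (Ioi (0:ℝ)) := by
    have hpre : (fun t : ℝ => x * t) ⁻¹' (Ioi 0) = Ioi 0 := by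
      ext t; simp [mem_Ioi, mul_pos_iff_of_pos_left, hx]
    rw [show volume.restrict (Ioi (0:ℝ)) = volume.restrict ((fun t : ℝ => x * t) ⁻¹' (Ioi 0)) by rw [hpre],
      ← Measure.restrict_map hg measurableSet_Ioi, Real.map_volume_mul_left hx.ne',
      Measure.restrict_smul, abs_of_pos (inv_pos.2 hx)]
    rw [hpre]
  have key : ∫⁻ y in Ioi (0:ℝ), ENNReal.ofReal (y ^ c / (x + y)) =
      ENNReal.ofReal x * ∫⁻ t in Ioi (0:ℝ), ENNReal.ofReal ((x * t) ^ c / (x + x * t)) := by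
    have := lintegral_map' (f := fun y : ℝ => ENNReal.ofReal (y ^ c / (x + y)))
      (g := fun t : ℝ => x * t) (μ := volume.restrict (Ioi 0))
      (((measurable_id.pow_const c).div (measurable_const.add measurable_id)).ennreal_ofReal.aemeasurable)
      hg.aemeasurable
    rw [hmap] at this
    rw [lintegral_smul_measure, smul_eq_mul] at this
    rw [← this, ← mul_assoc, ← ENNReal.ofReal_mul hx.le, mul_inv_cancel₀ hx.ne',
      ENNReal.ofReal_one, one_mul]
  rw [key]
  have congr2 : ∫⁻ t in Ioi (0:ℝ), ENNReal.ofReal ((x * t) ^ c / (x + x * t)) =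
      ∫⁻ t in Ioi (0:ℝ), ENNReal.ofReal (x ^ c * x⁻¹) * ENNReal.ofReal (t ^ c / (1 + t)) := by
    refine setLIntegral_congr_fun measurableSet_Ioi (fun t ht => ?_)
    have ht0 : 0 < t := ht
    rw [← ENNReal.ofReal_mul (by positivity)]
    congr 1
    rw [Real.mul_rpow hx.le ht0.le]
    have : x + x * t = x * (1 + t) := by ring
    rw [this]
    field_simp
  rw [congr2, lintegral_const_mul' _ _ ENNReal.ofReal_ne_top, ← Jker, ← mul_assoc,
    ← ENNReal.ofReal_mul hx.le]
  congr 2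
  have hxne : x ≠ 0 := hx.ne'
  field_simp

theorem hilbert_stieltjes_bounded_weighted
    (p r : ℝ) (hp : 1 < p) (hr₁ : -1 < r) (hr₂ : r < p - 1) :
    ∃ C : ℝ, 0 < C ∧ ∀ f : ℝ → ℝ, Measurable f →
      (∫⁻ x in Ioi (0:ℝ), ENNReal.ofReal (|f x| ^ p * x ^ r)) < ⊤ →
      (∫⁻ x in Ioi (0:ℝ),
          ENNReal.ofReal (|∫ y in Ioi (0:ℝ), f y / (x + y)| ^ p * x ^ r))
        ≤ ENNReal.ofReal (C ^ p) *
            ∫⁻ x in Ioi (0:ℝ), ENNReal.ofReal (|f x| ^ p * x ^ r) := by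
  have hp0 : (0:ℝ) < p := by linarith
  have hp1 : p - 1 > 0 := by linarith
  set q : ℝ := p / (p - 1) with hq_def
  have hq0 : 0 < q := div_pos hp0 hp1
  have hpq : p.HolderConjugate q := Real.HolderConjugate.conjExponent hp
  -- choice of the auxiliary exponent a
  set a : ℝ := (max r 0 + min (r + 1) (p - 1)) / 2 with ha_def
  have hlt : max r 0 < min (r + 1) (p - 1) := by
    rcases le_total r 0 with h | h
    · rw [max_eq_right h]; exact lt_min (by linarith) hp1
    · rw [max_eq_left h]; exact lt_min (by linarith) (by linarith)
  have ha1 : r < a := by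
    have h1 := le_max_left r 0
    have : r ⊔ 0 < (r + 1) ⊓ (p - 1) := hlt
    simp only [ha_def]; linarith
  have ha3 : 0 < a := by simp only [ha_def]; linarith [hlt, le_max_right r 0]
  have ha2 : a < r + 1 := by simp only [ha_def]; linarith [hlt, min_le_left (r+1) (p-1)]
  have ha4 : a < p - 1 := by simp only [ha_def]; linarith [hlt, min_le_right (r+1) (p-1)]
  set s : ℝ := a / p with hs_def
  set b : ℝ := a / (p - 1) with hb_def
  have hsq : s * q = b := by rw [hs_def, hb_def, hq_def]; field_simp; try ring
  have hsp : s * p = a := by rw [hs_def, div_mul_cancel₀ _ hp0.ne']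
  have hb0 : 0 < b := div_pos ha3 hp1
  have hb1 : b < 1 := (div_lt_one hp1).2 ha4
  -- the two constants
  have hK1 : Jker (-b) < ⊤ := Jker_lt_top (by linarith) (by linarith)
  have hK2 : Jker (r - a) < ⊤ := Jker_lt_top (by linarith) (by linarith)
  set e : ℝ := p / q with he_def
  have he0 : 0 ≤ e := div_nonneg hp0.le hq0.le
  set D : ℝ≥0∞ := Jker (-b) ^ e * Jker (r - a) with hD_def
  have hDne : D ≠ ⊤ :=
    ENNReal.mul_ne_top (ENNReal.rpow_ne_top_of_nonneg he0 hK1.ne) hK2.ne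
  refine ⟨(D.toReal + 1) ^ (1/p), Real.rpow_pos_of_pos (by positivity) _, ?_⟩
  intro f hf _hfin
  set C : ℝ := (D.toReal + 1) ^ (1/p) with hC_def
  have hCp : ENNReal.ofReal (C ^ p) = ENNReal.ofReal (D.toReal + 1) := by
    rw [hC_def, ← Real.rpow_mul (by positivity), one_div, inv_mul_cancel₀ hp0.ne',
      Real.rpow_one]
  have hDle : D ≤ ENNReal.ofReal (C ^ p) := by
    rw [hCp]
    calc D = ENNReal.ofReal D.toReal := (ENNReal.ofReal_toReal hDne).symm
      _ ≤ ENNReal.ofReal (D.toReal + 1) := ENNReal.ofReal_le_ofReal (by linarith)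
  -- notation
  set G : ℝ → ℝ≥0∞ := fun y => ENNReal.ofReal (|f y| ^ p * y ^ a) with hG_def
  -- pointwise key bound
  have key : ∀ x ∈ Ioi (0:ℝ),
      ENNReal.ofReal (|∫ y in Ioi (0:ℝ), f y / (x + y)| ^ p * x ^ r) ≤
        Jker (-b) ^ e *
          ∫⁻ y in Ioi (0:ℝ), G y * ENNReal.ofReal (x ^ (r - a) / (x + y)) := by
    intro x hx
    have hx0 : (0:ℝ) < x := hx
    -- step 1: bound |Tf x| by the lintegral of the absolute values
    have step1 : ENNReal.ofReal (|∫ y in Ioi (0:ℝ), f y / (x + y)|) ≤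
        ∫⁻ y in Ioi (0:ℝ), ENNReal.ofReal (|f y| / (x + y)) := by
      rw [← Real.enorm_eq_ofReal_abs]
      refine le_trans (enorm_integral_le_lintegral_enorm _) ?_
      refine le_of_eq (setLIntegral_congr_fun measurableSet_Ioi
        (fun y hy => ?_))
      rw [Real.enorm_eq_ofReal_abs, abs_div, abs_of_pos (by linarith [mem_Ioi.1 hy] : (0:ℝ) < x + y)]
    -- Hölder
    set φ : ℝ → ℝ≥0∞ := fun y =>
      ENNReal.ofReal (|f y| * ((y / x) ^ s * ((x + y)⁻¹) ^ (1/p))) with hφ_def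
    set ψ : ℝ → ℝ≥0∞ := fun y =>
      ENNReal.ofReal ((x / y) ^ s * ((x + y)⁻¹) ^ (1/q)) with hψ_def
    have hφm : AEMeasurable φ (volume.restrict (Ioi 0)) := by
      refine Measurable.aemeasurable ?_
      exact (hf.abs.mul (((measurable_id.div_const x).pow_const s).mul
        (((measurable_const.add measurable_id).inv).pow_const (1/p)))).ennreal_ofReal
    have hψm : AEMeasurable ψ (volume.restrict (Ioi 0)) := by
      refine Measurable.aemeasurable ?_
      exact (((measurable_const.div measurable_id).pow_const s).mul
        (((measurable_const.add measurable_id).inv).pow_const (1/q))).ennreal_ofReal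
    have hmul : ∫⁻ y in Ioi (0:ℝ), ENNReal.ofReal (|f y| / (x + y)) =
        ∫⁻ y in Ioi (0:ℝ), (φ * ψ) y := by
      refine setLIntegral_congr_fun measurableSet_Ioi
        (fun y hy => ?_)
      have hy0 : (0:ℝ) < y := hy
      have hxy : (0:ℝ) < x + y := by linarith
      simp only [Pi.mul_apply, hφ_def, hψ_def]
      rw [← ENNReal.ofReal_mul (by positivity)]
      congr 1
      have h1 : (y / x) ^ s * (x / y) ^ s = 1 := by
        rw [← Real.mul_rpow (by positivity) (by positivity),
          div_mul_div_comm, mul_comm y x, div_self (by positivity), Real.one_rpow]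
      have h2 : ((x + y)⁻¹) ^ (1/p) * ((x + y)⁻¹) ^ (1/q) = (x + y)⁻¹ := by
        rw [← Real.rpow_add (by positivity),
          show (1/p + 1/q : ℝ) = 1 by rw [one_div, one_div]; exact hpq.inv_add_inv_eq_one,
          Real.rpow_one]
      calc |f y| / (x + y) = |f y| * ((y / x) ^ s * (x / y) ^ s *
              (((x + y)⁻¹) ^ (1/p) * ((x + y)⁻¹) ^ (1/q))) := by
            rw [h1, h2]; ring
        _ = |f y| * ((y / x) ^ s * ((x + y)⁻¹) ^ (1/p)) *
              ((x / y) ^ s * ((x + y)⁻¹) ^ (1/q)) := by ring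
    have holder := ENNReal.lintegral_mul_le_Lp_mul_Lq (volume.restrict (Ioi 0)) hpq hφm hψm
    -- compute ∫ φ^p
    have hφp : ∫⁻ y in Ioi (0:ℝ), φ y ^ p =
        ∫⁻ y in Ioi (0:ℝ), ENNReal.ofReal (|f y| ^ p * ((y / x) ^ a * (x + y)⁻¹)) := by
      refine setLIntegral_congr_fun measurableSet_Ioi
        (fun y hy => ?_)
      have hy0 : (0:ℝ) < y := hy
      have hxy : (0:ℝ) < x + y := by linarith
      simp only [hφ_def]
      rw [ENNReal.ofReal_rpow_of_nonneg (by positivity : (0:ℝ) ≤ |f y| * ((y / x) ^ s * (x + y)⁻¹ ^ (1 / p))) hp0.le]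
      congr 1
      rw [Real.mul_rpow (abs_nonneg _) (by positivity),
        Real.mul_rpow (by positivity) (by positivity),
        ← Real.rpow_mul (by positivity), ← Real.rpow_mul (by positivity), hsp,
        one_div, inv_mul_cancel₀ hp0.ne', Real.rpow_one]
    -- compute ∫ ψ^q
    have hψq : ∫⁻ y in Ioi (0:ℝ), ψ y ^ q = Jker (-b) := by
      have : ∫⁻ y in Ioi (0:ℝ), ψ y ^ q =
          ∫⁻ y in Ioi (0:ℝ), ENNReal.ofReal (x ^ b) * ENNReal.ofReal (y ^ (-b) / (x + y)) := by
        refine setLIntegral_congr_fun measurableSet_Ioi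
          (fun y hy => ?_)
        have hy0 : (0:ℝ) < y := hy
        have hxy : (0:ℝ) < x + y := by linarith
        simp only [hψ_def]
        rw [ENNReal.ofReal_rpow_of_nonneg (by positivity : (0:ℝ) ≤ (x / y) ^ s * (x + y)⁻¹ ^ (1 / q)) hq0.le,
          ← ENNReal.ofReal_mul (by positivity)]
        congr 1
        rw [Real.mul_rpow (by positivity) (by positivity),
          ← Real.rpow_mul (by positivity), ← Real.rpow_mul (by positivity), hsq,
          one_div, inv_mul_cancel₀ hq0.ne', Real.rpow_one,
          Real.div_rpow hx0.le hy0.le, Real.rpow_neg hy0.le]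
        field_simp
      rw [this, lintegral_const_mul' _ _ ENNReal.ofReal_ne_top,
        lintegral_kernel_scale (-b) hx0, ← mul_assoc, ← ENNReal.ofReal_mul (by positivity),
        ← Real.rpow_add hx0, add_neg_cancel, Real.rpow_zero, ENNReal.ofReal_one, one_mul]
    -- assemble pointwise estimate
    have habs : ENNReal.ofReal (|∫ y in Ioi (0:ℝ), f y / (x + y)| ^ p * x ^ r) =
        ENNReal.ofReal (|∫ y in Ioi (0:ℝ), f y / (x + y)|) ^ p * ENNReal.ofReal (x ^ r) := by
      rw [ENNReal.ofReal_mul (by positivity),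
        ENNReal.ofReal_rpow_of_nonneg (abs_nonneg _) hp0.le]
    rw [habs]
    have hTbound : ENNReal.ofReal (|∫ y in Ioi (0:ℝ), f y / (x + y)|) ^ p ≤
        (∫⁻ y in Ioi (0:ℝ), ENNReal.ofReal (|f y| ^ p * ((y / x) ^ a * (x + y)⁻¹))) *
          Jker (-b) ^ e := by
      calc ENNReal.ofReal (|∫ y in Ioi (0:ℝ), f y / (x + y)|) ^ p
          ≤ ((∫⁻ y in Ioi (0:ℝ), φ y ^ p) ^ (1/p) * (∫⁻ y in Ioi (0:ℝ), ψ y ^ q) ^ (1/q)) ^ p := by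
            refine ENNReal.rpow_le_rpow ?_ hp0.le
            refine le_trans step1 ?_
            rw [hmul]; exact holder
        _ = (∫⁻ y in Ioi (0:ℝ), φ y ^ p) * (∫⁻ y in Ioi (0:ℝ), ψ y ^ q) ^ e := by
            rw [ENNReal.mul_rpow_of_nonneg _ _ hp0.le, ← ENNReal.rpow_mul, ← ENNReal.rpow_mul,
              one_div, inv_mul_cancel₀ hp0.ne', ENNReal.rpow_one]
            congr 2
            rw [he_def]; field_simp
        _ = _ := by rw [hφp, hψq]
    calc ENNReal.ofReal (|∫ y in Ioi (0:ℝ), f y / (x + y)|) ^ p * ENNReal.ofReal (x ^ r)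
        ≤ ((∫⁻ y in Ioi (0:ℝ), ENNReal.ofReal (|f y| ^ p * ((y / x) ^ a * (x + y)⁻¹))) *
            Jker (-b) ^ e) * ENNReal.ofReal (x ^ r) := mul_le_mul_left hTbound _
      _ = Jker (-b) ^ e *
            ((∫⁻ y in Ioi (0:ℝ), ENNReal.ofReal (|f y| ^ p * ((y / x) ^ a * (x + y)⁻¹))) *
              ENNReal.ofReal (x ^ r)) := by ring
      _ = Jker (-b) ^ e *
            ∫⁻ y in Ioi (0:ℝ), G y * ENNReal.ofReal (x ^ (r - a) / (x + y)) := by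
          congr 1
          rw [← lintegral_mul_const' _ _ ENNReal.ofReal_ne_top]
          refine setLIntegral_congr_fun measurableSet_Ioi
            (fun y hy => ?_)
          have hy0 : (0:ℝ) < y := hy
          have hxy : (0:ℝ) < x + y := by linarith
          rw [hG_def, ← ENNReal.ofReal_mul (by positivity), ← ENNReal.ofReal_mul (by positivity)]
          congr 1
          have hxa : x ^ a ≠ 0 := (Real.rpow_pos_of_pos hx0 a).ne'
          rw [Real.div_rpow hy0.le hx0.le, Real.rpow_sub hx0]
          field_simp
          try ring
  -- integrate the pointwise bound
  set K1 : ℝ≥0∞ := Jker (-b) ^ e with hK1_def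
  have hK1ne : K1 ≠ ⊤ := ENNReal.rpow_ne_top_of_nonneg he0 hK1.ne
  have step2 : (∫⁻ x in Ioi (0:ℝ),
      ENNReal.ofReal (|∫ y in Ioi (0:ℝ), f y / (x + y)| ^ p * x ^ r)) ≤
      K1 * ∫⁻ x in Ioi (0:ℝ), ∫⁻ y in Ioi (0:ℝ),
        G y * ENNReal.ofReal (x ^ (r - a) / (x + y)) := by
    rw [← lintegral_const_mul' _ _ hK1ne]
    refine lintegral_mono_ae ?_
    filter_upwards [ae_restrict_mem measurableSet_Ioi] with x hx
    exact key x hx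
  have swap : (∫⁻ x in Ioi (0:ℝ), ∫⁻ y in Ioi (0:ℝ),
        G y * ENNReal.ofReal (x ^ (r - a) / (x + y))) =
      ∫⁻ y in Ioi (0:ℝ), ∫⁻ x in Ioi (0:ℝ),
        G y * ENNReal.ofReal (x ^ (r - a) / (x + y)) := by
    refine lintegral_lintegral_swap ?_
    refine Measurable.aemeasurable ?_
    have h1 : Measurable fun z : ℝ × ℝ => G z.2 :=
      (((hf.comp measurable_snd).abs.pow_const p).mul
        (measurable_snd.pow_const a)).ennreal_ofReal
    have h2 : Measurable fun z : ℝ × ℝ => ENNReal.ofReal (z.1 ^ (r - a) / (z.1 + z.2)) :=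
      ((measurable_fst.pow_const (r - a)).div (measurable_fst.add measurable_snd)).ennreal_ofReal
    exact h1.mul h2
  have inner : ∀ y ∈ Ioi (0:ℝ),
      (∫⁻ x in Ioi (0:ℝ), G y * ENNReal.ofReal (x ^ (r - a) / (x + y))) =
        G y * (ENNReal.ofReal (y ^ (r - a)) * Jker (r - a)) := by
    intro y hy
    have hy0 : (0:ℝ) < y := hy
    rw [lintegral_const_mul' _ _ ENNReal.ofReal_ne_top]
    congr 1
    have : (∫⁻ x in Ioi (0:ℝ), ENNReal.ofReal (x ^ (r - a) / (x + y))) =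
        ∫⁻ x in Ioi (0:ℝ), ENNReal.ofReal (x ^ (r - a) / (y + x)) := by
      refine setLIntegral_congr_fun measurableSet_Ioi
        (fun x hx => by rw [add_comm])
    rw [this, lintegral_kernel_scale (r - a) hy0]
  have step3 : (∫⁻ y in Ioi (0:ℝ), ∫⁻ x in Ioi (0:ℝ),
        G y * ENNReal.ofReal (x ^ (r - a) / (x + y))) =
      Jker (r - a) * ∫⁻ y in Ioi (0:ℝ), ENNReal.ofReal (|f y| ^ p * y ^ r) := by
    rw [← lintegral_const_mul' _ _ hK2.ne]
    refine setLIntegral_congr_fun measurableSet_Ioi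
      (fun y hy => ?_)
    have hy0 : (0:ℝ) < y := hy
    rw [inner y hy, hG_def]
    simp only []
    have hsplit : ENNReal.ofReal (|f y| ^ p * y ^ a) * ENNReal.ofReal (y ^ (r - a)) =
        ENNReal.ofReal (|f y| ^ p * y ^ r) := by
      rw [← ENNReal.ofReal_mul (by positivity)]
      congr 1
      rw [mul_assoc, ← Real.rpow_add hy0]
      ring_nf
    calc ENNReal.ofReal (|f y| ^ p * y ^ a) * (ENNReal.ofReal (y ^ (r - a)) * Jker (r - a))
        = ENNReal.ofReal (|f y| ^ p * y ^ a) * ENNReal.ofReal (y ^ (r - a)) * Jker (r - a) := by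
          ring
      _ = Jker (r - a) * ENNReal.ofReal (|f y| ^ p * y ^ r) := by rw [hsplit]; ring
  calc (∫⁻ x in Ioi (0:ℝ),
      ENNReal.ofReal (|∫ y in Ioi (0:ℝ), f y / (x + y)| ^ p * x ^ r))
      ≤ K1 * ∫⁻ x in Ioi (0:ℝ), ∫⁻ y in Ioi (0:ℝ),
          G y * ENNReal.ofReal (x ^ (r - a) / (x + y)) := step2
    _ = K1 * (Jker (r - a) * ∫⁻ y in Ioi (0:ℝ), ENNReal.ofReal (|f y| ^ p * y ^ r)) := by
        rw [swap, step3]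
    _ = D * ∫⁻ y in Ioi (0:ℝ), ENNReal.ofReal (|f y| ^ p * y ^ r) := by
        rw [hD_def, hK1_def, mul_assoc]
    _ ≤ ENNReal.ofReal (C ^ p) * ∫⁻ y in Ioi (0:ℝ), ENNReal.ofReal (|f y| ^ p * y ^ r) :=
        mul_le_mul_left hDle _
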